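/- Let G be a finite abelian group, g a natural number, and B ∈ M_g(ℂ[G]) a g×g matrix over the group algebra ℂ[G]. View ℂ[G]^g as a finite-dimensional ℂ-vector space. Then the determinant over ℂ of the ℂ-linear endomorphism of ℂ[G]^g given by multiplication by B equals ∏_{ψ} det_ℂ(ψ(B)), the product running over all group homomorphisms ψ : G → ℂˣ, where ψ(B) ∈ M_g(ℂ) is the matrix obtained by applying the induced ℂ-algebra homomorphism ψ : ℂ[G] → ℂ to each entry of B. -/

import Mathlib

/-- The `ℂ`-algebra homomorphism `ℂ[Γ] → ℂ` induced by a character `χ : Γ → ℂˣ`. -/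
noncomputable def charAlgHom (Γ : Type*) [CommGroup Γ] (χ : Γ →* ℂˣ) :
    MonoidAlgebra ℂ Γ →ₐ[ℂ] ℂ :=
  MonoidAlgebra.lift ℂ ℂ Γ ((Units.coeHom ℂ).comp χ)

namespace Stmt15Aux

open Module

variable (G : Type*) [CommGroup G] [Finite G]

/-- Multiplicative characters are the same as complex additive characters of `Additive G`. -/
noncomputable def charEquiv : (G →* ℂˣ) ≃ AddChar (Additive G) ℂ where
  toFun ψ := AddChar.toMonoidHomEquiv.symm
    ((Units.coeHom ℂ).comp (ψ.comp (MulEquiv.multiplicativeAdditive G).toMonoidHom))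
  invFun χ := ((AddChar.toMonoidHomEquiv χ).toHomUnits).comp
    ((MulEquiv.multiplicativeAdditive G).symm.toMonoidHom)
  left_inv ψ := by
    ext x
    simp [Units.ext_iff, MulEquiv.multiplicativeAdditive]
  right_inv χ := by
    ext x
    simp [MulEquiv.multiplicativeAdditive]

noncomputable instance : Fintype (G →* ℂˣ) :=
  letI : Fintype G := Fintype.ofFinite G
  Fintype.ofEquiv _ (charEquiv G).symm

lemma card_char [Fintype G] : Fintype.card (G →* ℂˣ) = Fintype.card G := by
  rw [Fintype.card_congr (charEquiv G), AddChar.card_eq]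
  exact Fintype.card_congr Additive.toMul

lemma exists_char_ne {a : G} (ha : a ≠ 1) : ∃ ψ : G →* ℂˣ, ψ a ≠ 1 := by
  obtain ⟨χ, hχ⟩ := (AddChar.exists_apply_ne_zero (a := Additive.ofMul a)).2
    (by simpa using ha)
  refine ⟨(charEquiv G).symm χ, fun h => hχ ?_⟩
  have := congrArg (Units.coeHom ℂ) h
  simpa [charEquiv, MulEquiv.multiplicativeAdditive] using this

/-- Evaluation at `a` as a monoid hom on characters. -/
def evalHom (a : G) : (G →* ℂˣ) →* ℂ where
  toFun ψ := ψ a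
  map_one' := rfl
  map_mul' ψ χ := rfl

lemma evalHom_injective : Function.Injective (evalHom G) := by
  intro a b h
  by_contra hab
  obtain ⟨ψ, hψ⟩ := exists_char_ne G (a := a * b⁻¹)
    (fun hh => hab (mul_inv_eq_one.mp hh))
  apply hψ
  have : (ψ a : ℂ) = ψ b := congrFun (congrArg DFunLike.coe h) ψ
  have hab' : ψ a = ψ b := Units.ext this
  rw [map_mul, map_inv, hab', mul_inv_cancel]

/-- The Fourier transform algebra homomorphism. -/
noncomputable def fourier : MonoidAlgebra ℂ G →ₐ[ℂ] ((G →* ℂˣ) → ℂ) :=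
  Pi.algHom ℂ _ fun ψ => charAlgHom G ψ

lemma fourier_apply (x : MonoidAlgebra ℂ G) (ψ : G →* ℂˣ) :
    fourier G x ψ = charAlgHom G ψ x := rfl

lemma fourier_single (a : G) : fourier G (MonoidAlgebra.single a 1) = ⇑(evalHom G a) := by
  funext ψ
  simp [fourier_apply, charAlgHom, MonoidAlgebra.lift_single, evalHom]

lemma fourier_bijective : Function.Bijective (fourier G) := by
  classical
  letI : Fintype G := Fintype.ofFinite G
  have li : LinearIndependent ℂ fun a : G => ⇑(evalHom G a) :=
    (linearIndependent_monoidHom ((G →* ℂˣ)) ℂ).comp _ (evalHom_injective G)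
  have hcard : Fintype.card G = finrank ℂ ((G →* ℂˣ) → ℂ) := by
    rw [finrank_fintype_fun_eq_card, card_char]
  have hspan := li.span_eq_top_of_card_eq_finrank hcard
  have hsurj : Function.Surjective (fourier G) := by
    have hrange : ⊤ ≤ LinearMap.range (fourier G).toLinearMap := by
      rw [← hspan]
      refine Submodule.span_le.2 ?_
      rintro _ ⟨a, rfl⟩
      exact ⟨MonoidAlgebra.single a 1, fourier_single G a⟩
    intro y
    obtain ⟨x, hx⟩ := hrange (Submodule.mem_top (x := y))
    exact ⟨x, hx⟩
  have b : Basis G ℂ (MonoidAlgebra ℂ G) := MonoidAlgebra.basis G ℂ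
  haveI : Module.Finite ℂ (MonoidAlgebra ℂ G) := Module.Finite.of_basis b
  have hinj : Function.Injective (fourier G).toLinearMap :=
    (LinearMap.injective_iff_surjective_of_finrank_eq_finrank (by
      rw [finrank_eq_card_basis b, hcard])).2 hsurj
  exact ⟨hinj, hsurj⟩

/-- The Fourier transform as an algebra isomorphism. -/
noncomputable def fourierEquiv : MonoidAlgebra ℂ G ≃ₐ[ℂ] ((G →* ℂˣ) → ℂ) :=
  AlgEquiv.ofBijective (fourier G) (fourier_bijective G)

lemma fourierEquiv_apply (x : MonoidAlgebra ℂ G) (ψ : G →* ℂˣ) :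
    fourierEquiv G x ψ = charAlgHom G ψ x := rfl


/-- Determinant of a "diagonal" endomorphism of a finite product. -/
lemma det_piMap {ι : Type*} [Fintype ι] [DecidableEq ι] {n : ℕ}
    (f : ι → ((Fin n → ℂ) →ₗ[ℂ] (Fin n → ℂ))) :
    LinearMap.det (LinearMap.pi fun i => (f i).comp (LinearMap.proj i)) =
      ∏ i, LinearMap.det (f i) := by
  classical
  let b : Basis (Fin n × ι) ℂ (ι → Fin n → ℂ) :=
    (Pi.basis fun _ : ι => Pi.basisFun ℂ (Fin n)).reindex
      ((Equiv.sigmaEquivProd ι (Fin n)).trans (Equiv.prodComm ι (Fin n)))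
  rw [← LinearMap.det_toMatrix b]
  have hM : LinearMap.toMatrix b b (LinearMap.pi fun i => (f i).comp (LinearMap.proj i)) =
      Matrix.blockDiagonal fun i =>
        LinearMap.toMatrix (Pi.basisFun ℂ (Fin n)) (Pi.basisFun ℂ (Fin n)) (f i) := by
    ext ⟨j, i⟩ ⟨j', i'⟩
    rw [LinearMap.toMatrix_apply, Matrix.blockDiagonal_apply]
    have hb : b (j', i') = Pi.single i' (Pi.single j' (1 : ℂ)) := by
      simp [b, Basis.reindex_apply]
    have hrepr : ∀ x : ι → Fin n → ℂ, b.repr x (j, i) = x i j := by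
      intro x
      rw [show b = _ from rfl, Basis.repr_reindex_apply]
      simp
    rw [hb, hrepr]
    rcases eq_or_ne i i' with rfl | hii
    · rw [if_pos rfl, LinearMap.toMatrix_apply]
      simp [LinearMap.pi_apply]
    · rw [if_neg hii]
      simp [LinearMap.pi_apply, Pi.single_eq_of_ne hii]
  rw [hM, Matrix.det_blockDiagonal]
  simp [LinearMap.det_toMatrix]

/-- Transposition of a doubly-indexed family of complex numbers, as a linear equivalence. -/
noncomputable def swapLinearEquiv (ι κ : Type*) : (ι → κ → ℂ) ≃ₗ[ℂ] (κ → ι → ℂ) where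
  toFun x := Function.swap x
  map_add' _ _ := rfl
  map_smul' _ _ := rfl
  invFun x := Function.swap x
  left_inv _ := rfl
  right_inv _ := rfl

end Stmt15Aux

/-- Let `G` be a finite abelian group, `g ∈ ℕ`, and `B` a `g × g` matrix over
`ℂ[G]`.  The determinant over `ℂ` of the `ℂ`-linear endomorphism of `ℂ[G]^g` given by
multiplication by `B` equals `∏_ψ det_ℂ(ψ(B))`, the (finite) product running over all group
homomorphisms `ψ : G → ℂˣ`, where `ψ(B)` is the complex matrix obtained by applying the
induced algebra homomorphism `ψ : ℂ[G] → ℂ` entrywise. -/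
theorem stmt15 (G : Type*) [CommGroup G] [Finite G] (g : ℕ)
    (B : Matrix (Fin g) (Fin g) (MonoidAlgebra ℂ G)) :
    LinearMap.det (LinearMap.restrictScalars ℂ B.mulVecLin) =
      ∏ᶠ ψ : G →* ℂˣ, (B.map (charAlgHom G ψ)).det := by
  classical
  let Φ := Stmt15Aux.fourierEquiv G
  let E : (Fin g → MonoidAlgebra ℂ G) ≃ₗ[ℂ] ((G →* ℂˣ) → Fin g → ℂ) :=
    (LinearEquiv.piCongrRight fun _ : Fin g => Φ.toLinearEquiv).trans
      (Stmt15Aux.swapLinearEquiv (Fin g) (G →* ℂˣ))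
  rw [← LinearMap.det_conj (LinearMap.restrictScalars ℂ B.mulVecLin) E]
  have hconj : (E : (Fin g → MonoidAlgebra ℂ G) →ₗ[ℂ] ((G →* ℂˣ) → Fin g → ℂ)) ∘ₗ
      (LinearMap.restrictScalars ℂ B.mulVecLin) ∘ₗ
      (E.symm : ((G →* ℂˣ) → Fin g → ℂ) →ₗ[ℂ] (Fin g → MonoidAlgebra ℂ G)) =
      LinearMap.pi fun ψ => ((B.map (charAlgHom G ψ)).mulVecLin).comp (LinearMap.proj ψ) := by
    apply LinearMap.ext
    intro v
    obtain ⟨x, rfl⟩ := E.surjective v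
    simp only [LinearMap.comp_apply, LinearEquiv.coe_coe, LinearEquiv.symm_apply_apply]
    funext ψ i
    rw [LinearMap.pi_apply, LinearMap.comp_apply, LinearMap.proj_apply]
    show charAlgHom G ψ ((B.mulVec x) i) =
      (B.map (charAlgHom G ψ)).mulVec (fun j => charAlgHom G ψ (x j)) i
    simp [Matrix.mulVec, dotProduct, map_sum, map_mul, Matrix.map_apply]
  rw [hconj, Stmt15Aux.det_piMap, finprod_eq_prod_of_fintype]
  refine Finset.prod_congr rfl fun ψ _ => ?_
  rw [← Matrix.toLin'_apply', LinearMap.det_toLin']
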